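/- Let (A,∘) be a finite-dimensional alternative algebra over a field of characteristic ≠ 2 and let r ∈ A⊗A be skew-symmetric. Then r is a solution of the alternative Yang–Baxter equation r₂₃∘r₁₂ − r₁₂∘r₁₃ − r₁₃∘r₂₃ = 0 if and only if T_r(a*)∘T_r(b*) = T_r(r_∘*(T_r(a*))b* + l_∘*(T_r(b*))a*) for all a*,b* ∈ A*, i.e., T_r is an Al-operator of (A,∘) associated to the bimodule (A*, r_∘*, l_∘*). In that case, a*≺b* = l_∘*(T_r(b*))a* and a*≻b* = r_∘*(T_r(a*))b* define a pre-alternative algebra structure on A*. -/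

import Mathlib

open TensorProduct

universe u v w

variable {k : Type u} [Field k]

section Defs

variable {M : Type v} {V : Type w} [AddCommGroup M] [Module k M] [AddCommGroup V] [Module k V]

/-- Alternative algebra: both alternative laws. -/
def IsAlt (m : M →ₗ[k] M →ₗ[k] M) : Prop :=
  (∀ x y : M, m (m x x) y = m x (m x y)) ∧ (∀ x y : M, m (m y x) x = m y (m x x))

/-- right associator -/
def rAssoc (p s : M →ₗ[k] M →ₗ[k] M) (x y z : M) : M :=
  p (p x y) z - p x (p y z + s y z)

/-- middle associator -/
def mAssoc (p s : M →ₗ[k] M →ₗ[k] M) (x y z : M) : M :=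
  p (s x y) z - s x (p y z)

/-- left associator -/
def lAssoc (p s : M →ₗ[k] M →ₗ[k] M) (x y z : M) : M :=
  s (p x y + s x y) z - s x (s y z)

/-- Pre-alternative algebra. -/
def IsPreAlt (p s : M →ₗ[k] M →ₗ[k] M) : Prop :=
  (∀ x y z : M, mAssoc p s x y z + rAssoc p s y x z = 0) ∧
  (∀ x y z : M, mAssoc p s x y z + lAssoc p s x z y = 0) ∧
  (∀ x y : M, rAssoc p s y x x = 0) ∧
  (∀ x y : M, lAssoc p s x x y = 0)

/-- Bimodule of an alternative algebra. -/
def IsAltBimod (m : M →ₗ[k] M →ₗ[k] M) (L R : M →ₗ[k] Module.End k V) : Prop :=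
  (∀ x : M, L (m x x) = L x * L x) ∧
  (∀ x : M, R (m x x) = R x * R x) ∧
  (∀ x y : M, R y * L x - L x * R y = R (m x y) - R y * R x) ∧
  (∀ x y : M, L (m y x) - L y * L x = L y * R x - R x * L y)

/-- Bimodule of a pre-alternative algebra. -/
def IsPreAltBimod (p s : M →ₗ[k] M →ₗ[k] M) (Lp Rp Ls Rs : M →ₗ[k] Module.End k V) : Prop :=
  (∀ x y : M, Ls ((p x y + s x y) + (p y x + s y x)) = Ls x * Ls y + Ls y * Ls x) ∧
  (∀ x y : M, Rs y * ((Lp x + Ls x) + (Rp x + Rs x)) = Ls x * Rs y + Rs (s x y)) ∧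
  (∀ x y : M, Rp y * Ls x + Rp y * Rp x = Ls x * Rp y + Rp (p x y + s x y)) ∧
  (∀ x y : M, Rp y * Rs x + Rp y * Lp x = Rs (p x y) + Lp x * (Rp y + Rs y)) ∧
  (∀ x y : M, Lp (s x y) + Lp (p y x) = Ls x * Lp y + Lp y * (Lp x + Ls x)) ∧
  (∀ x y : M, Ls (p y x + s y x) + Rp x * Ls y = Ls y * Ls x + Ls y * Rp x) ∧
  (∀ x y : M, Rs y * (Rp x + Rs x) + Rp x * Rs y = Rs (s x y) + Rs (p y x)) ∧
  (∀ x y : M, Rs x * (Lp y + Ls y) + Lp (s y x) = Ls y * Rs x + Ls y * Lp x) ∧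
  (∀ x y : M, Rp y * Rp x + Rp x * Rp y = Rp ((p x y + s x y) + (p y x + s y x))) ∧
  (∀ x y : M, Rp y * Lp x + Lp (p x y) = Lp x * ((Rp y + Rs y) + (Lp y + Ls y)))

/-- Dual family of endomorphisms: `(dualT L) x = (L x)^*`. -/
noncomputable def dualT (L : M →ₗ[k] Module.End k V) :
    M →ₗ[k] Module.End k (Module.Dual k V) :=
  (Module.Dual.transpose (R := k) (M := V) (M' := V)) ∘ₗ L

/-- The linear map `A* → A` associated to an element of `A ⊗ A`:
`⟨u* ⊗ v*, r⟩ = ⟨u*, T_r v*⟩`, i.e. `T_r(v*) = Σ v*(bᵢ) • aᵢ`. -/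
noncomputable def Tr : (M ⊗[k] M) →ₗ[k] Module.Dual k M →ₗ[k] M :=
  TensorProduct.lift (LinearMap.mk₂ k
    (fun a b => (Module.Dual.eval k M b).smulRight a)
    (fun a a' b => by ext f; simp)
    (fun c a b => by ext f; simp only [LinearMap.smulRight_apply, LinearMap.smul_apply,
      Module.Dual.eval_apply]; exact smul_comm _ _ _)
    (fun a b b' => by ext f; simp [add_smul])
    (fun c a b => by ext f; simp [map_smul, mul_smul]))

noncomputable def tlift (m : M →ₗ[k] M →ₗ[k] M) : M ⊗[k] M →ₗ[k] M := TensorProduct.lift m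

/-- `r₁₂ ⋄ r₁₃` : `(a⊗b)⊗(c⊗d) ↦ (a⋄c)⊗b⊗d`. -/
noncomputable def comp12_13 (m : M →ₗ[k] M →ₗ[k] M) :
    (M ⊗[k] M) ⊗[k] (M ⊗[k] M) →ₗ[k] M ⊗[k] (M ⊗[k] M) :=
  (TensorProduct.map (tlift m) LinearMap.id) ∘ₗ
    (TensorProduct.tensorTensorTensorComm k M M M M).toLinearMap

/-- `r₁₃ ⋄ r₁₂` : `(a⊗b)⊗(c⊗d) ↦ (a⋄c)⊗d⊗b`. -/
noncomputable def comp13_12 (m : M →ₗ[k] M →ₗ[k] M) :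
    (M ⊗[k] M) ⊗[k] (M ⊗[k] M) →ₗ[k] M ⊗[k] (M ⊗[k] M) :=
  (TensorProduct.map (tlift m) (TensorProduct.comm k M M).toLinearMap) ∘ₗ
    (TensorProduct.tensorTensorTensorComm k M M M M).toLinearMap

/-- `r₁₂ ⋄ r₂₃` : `(a⊗b)⊗(c⊗d) ↦ a⊗(b⋄c)⊗d`. -/
noncomputable def comp12_23 (m : M →ₗ[k] M →ₗ[k] M) :
    (M ⊗[k] M) ⊗[k] (M ⊗[k] M) →ₗ[k] M ⊗[k] (M ⊗[k] M) :=
  (TensorProduct.map LinearMap.id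
      ((TensorProduct.map (tlift m) LinearMap.id) ∘ₗ
        (TensorProduct.assoc k M M M).symm.toLinearMap)) ∘ₗ
    (TensorProduct.assoc k M M (M ⊗[k] M)).toLinearMap

/-- `r₂₃ ⋄ r₁₂` : `(a⊗b)⊗(c⊗d) ↦ c⊗(a⋄d)⊗b`. -/
noncomputable def comp23_12 (m : M →ₗ[k] M →ₗ[k] M) :
    (M ⊗[k] M) ⊗[k] (M ⊗[k] M) →ₗ[k] M ⊗[k] (M ⊗[k] M) :=
  (TensorProduct.map LinearMap.id
      ((TensorProduct.map (tlift m.flip) LinearMap.id) ∘ₗ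
        (TensorProduct.assoc k M M M).symm.toLinearMap)) ∘ₗ
    (TensorProduct.assoc k M M (M ⊗[k] M)).toLinearMap ∘ₗ
    (TensorProduct.comm k (M ⊗[k] M) (M ⊗[k] M)).toLinearMap

/-- `r₁₃ ⋄ r₂₃` : `(a⊗b)⊗(c⊗d) ↦ a⊗c⊗(b⋄d)`. -/
noncomputable def comp13_23 (m : M →ₗ[k] M →ₗ[k] M) :
    (M ⊗[k] M) ⊗[k] (M ⊗[k] M) →ₗ[k] M ⊗[k] (M ⊗[k] M) :=
  (TensorProduct.map LinearMap.id (TensorProduct.map LinearMap.id (tlift m))) ∘ₗ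
    (TensorProduct.assoc k M M (M ⊗[k] M)).toLinearMap ∘ₗ
    (TensorProduct.tensorTensorTensorComm k M M M M).toLinearMap

/-- `r₂₃ ⋄ r₁₃` : `(a⊗b)⊗(c⊗d) ↦ c⊗a⊗(b⋄d)`. -/
noncomputable def comp23_13 (m : M →ₗ[k] M →ₗ[k] M) :
    (M ⊗[k] M) ⊗[k] (M ⊗[k] M) →ₗ[k] M ⊗[k] (M ⊗[k] M) :=
  (TensorProduct.map LinearMap.id (TensorProduct.map LinearMap.id (tlift m))) ∘ₗ
    (TensorProduct.assoc k M M (M ⊗[k] M)).toLinearMap ∘ₗ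
    (TensorProduct.map (TensorProduct.comm k M M).toLinearMap LinearMap.id) ∘ₗ
    (TensorProduct.tensorTensorTensorComm k M M M M).toLinearMap

/-- The alternative Yang–Baxter expression `r₂₃∘r₁₂ − r₁₂∘r₁₃ − r₁₃∘r₂₃`. -/
noncomputable def ayb (m : M →ₗ[k] M →ₗ[k] M) (r : M ⊗[k] M) : M ⊗[k] (M ⊗[k] M) :=
  comp23_12 m (r ⊗ₜ r) - comp12_13 m (r ⊗ₜ r) - comp13_23 m (r ⊗ₜ r)

/-- PA-equations. -/
noncomputable def PA11 (p s : M →ₗ[k] M →ₗ[k] M) (r : M ⊗[k] M) : M ⊗[k] (M ⊗[k] M) :=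
  comp12_13 (p + s) (r ⊗ₜ r) - comp23_12 s (r ⊗ₜ r) - comp13_23 p (r ⊗ₜ r)

noncomputable def PA12 (p s : M →ₗ[k] M →ₗ[k] M) (r : M ⊗[k] M) : M ⊗[k] (M ⊗[k] M) :=
  comp13_12 (p + s) (r ⊗ₜ r) - comp12_23 p (r ⊗ₜ r) - comp23_13 s (r ⊗ₜ r)

noncomputable def PA21 (p s : M →ₗ[k] M →ₗ[k] M) (r : M ⊗[k] M) : M ⊗[k] (M ⊗[k] M) :=
  comp12_23 (p + s) (r ⊗ₜ r) - comp23_13 p (r ⊗ₜ r) - comp13_12 s (r ⊗ₜ r)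

noncomputable def PA22 (p s : M →ₗ[k] M →ₗ[k] M) (r : M ⊗[k] M) : M ⊗[k] (M ⊗[k] M) :=
  comp23_12 (p + s) (r ⊗ₜ r) - comp13_23 s (r ⊗ₜ r) - comp12_13 p (r ⊗ₜ r)

noncomputable def PA31 (p s : M →ₗ[k] M →ₗ[k] M) (r : M ⊗[k] M) : M ⊗[k] (M ⊗[k] M) :=
  comp13_23 (p + s) (r ⊗ₜ r) - comp12_13 s (r ⊗ₜ r) - comp23_12 p (r ⊗ₜ r)

noncomputable def PA32 (p s : M →ₗ[k] M →ₗ[k] M) (r : M ⊗[k] M) : M ⊗[k] (M ⊗[k] M) :=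
  comp23_13 (p + s) (r ⊗ₜ r) - comp13_12 p (r ⊗ₜ r) - comp12_23 s (r ⊗ₜ r)

/-- Semidirect sum product on `M × V` for an alternative algebra `M` and a bimodule `(V,L,R)`. -/
def sd (m : M →ₗ[k] M →ₗ[k] M) (L R : M →ₗ[k] Module.End k V) :
    (M × V) →ₗ[k] (M × V) →ₗ[k] (M × V) :=
  LinearMap.mk₂ k (fun x y => (m x.1 y.1, L x.1 y.2 + R y.1 x.2))
    (fun x x' y => by refine Prod.ext ?_ ?_ <;> simp [map_add] <;> abel)
    (fun c x y => by refine Prod.ext ?_ ?_ <;> simp [map_smul, smul_add])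
    (fun x y y' => by refine Prod.ext ?_ ?_ <;> simp [map_add] <;> abel)
    (fun c x y => by refine Prod.ext ?_ ?_ <;> simp [map_smul, smul_add])

end Defs
section Aux
variable {A : Type v} [AddCommGroup A] [Module k A]

/-- pairing of `A⊗A` with a pair of functionals -/
noncomputable def pr2 (g h : Module.Dual k A) : A ⊗[k] A →ₗ[k] k :=
  TensorProduct.lift ((LinearMap.mul k k).compl₁₂ g h)

@[simp] lemma pr2_tmul (g h : Module.Dual k A) (x y : A) :
    pr2 g h (x ⊗ₜ[k] y) = g x * h y := rfl

/-- pairing of `A⊗(A⊗A)` with a triple of functionals -/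
noncomputable def pr3 (f g h : Module.Dual k A) : A ⊗[k] (A ⊗[k] A) →ₗ[k] k :=
  TensorProduct.lift ((LinearMap.mul k k).compl₁₂ f (pr2 g h))

@[simp] lemma pr3_tmul (f g h : Module.Dual k A) (x : A) (t : A ⊗[k] A) :
    pr3 f g h (x ⊗ₜ[k] t) = f x * pr2 g h t := rfl

lemma pr3_sep (t : A ⊗[k] (A ⊗[k] A))
    (ht : ∀ f g h : Module.Dual k A, pr3 f g h t = 0) : t = 0 := by
  classical
  let b := Module.Basis.ofVectorSpace k A
  have key : ∀ (i j l : Module.Basis.ofVectorSpaceIndex k A) (u : A ⊗[k] (A ⊗[k] A)),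
      (b.tensorProduct (b.tensorProduct b)).repr u (i, (j, l))
        = pr3 (b.coord i) (b.coord j) (b.coord l) u := by
    intro i j l u
    induction u using TensorProduct.induction_on with
    | zero => simp
    | add a c ha hc => simp [map_add, ha, hc]
    | tmul x t =>
      induction t using TensorProduct.induction_on with
      | zero => simp
      | add a c ha hc => simp only [tmul_add, map_add, ha, hc, Finsupp.add_apply]
      | tmul y z =>
        simp [Module.Basis.tensorProduct_repr_tmul_apply, Module.Basis.coord_apply, smul_eq_mul]
        ring
  refine (b.tensorProduct (b.tensorProduct b)).ext_elem fun i => ?_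
  obtain ⟨i, j, l⟩ := i
  rw [map_zero, Finsupp.zero_apply, key, ht]
end Aux
section Aux2
variable {A : Type v} [AddCommGroup A] [Module k A]

@[simp] lemma Tr_tmul (x y : A) (f : Module.Dual k A) :
    Tr (x ⊗ₜ[k] y) f = f y • x := rfl

lemma apply_Tr (f g : Module.Dual k A) (r : A ⊗[k] A) :
    f (Tr r g) = pr2 f g r := by
  induction r using TensorProduct.induction_on with
  | zero => simp
  | add a c ha hc => simp [map_add, ha, hc]
  | tmul x y => simp [mul_comm]

lemma pr2_comm (f g : Module.Dual k A) (r : A ⊗[k] A) :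
    pr2 f g (TensorProduct.comm k A A r) = pr2 g f r := by
  induction r using TensorProduct.induction_on with
  | zero => simp
  | add a c ha hc => simp [map_add, ha, hc]
  | tmul x y => simp [mul_comm]

lemma pr3_comp12_13 (m : A →ₗ[k] A →ₗ[k] A) (f g h : Module.Dual k A)
    (r r' : A ⊗[k] A) :
    pr3 f g h (comp12_13 m (r ⊗ₜ[k] r')) = f (m (Tr r g) (Tr r' h)) := by
  induction r using TensorProduct.induction_on with
  | zero => simp
  | add a c ha hc => simp [add_tmul, map_add, ha, hc]
  | tmul x y =>
    induction r' using TensorProduct.induction_on with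
    | zero => simp
    | add a c ha hc => simp [tmul_add, map_add, ha, hc]
    | tmul z w =>
      simp [comp12_13, tlift, map_smul, smul_smul]
      ring
lemma pr3_comp23_12 (m : A →ₗ[k] A →ₗ[k] A) (f g h : Module.Dual k A)
    (r r' : A ⊗[k] A) :
    pr3 f g h (comp23_12 m (r ⊗ₜ[k] r'))
      = g (m (Tr r h) (Tr (TensorProduct.comm k A A r') f)) := by
  induction r using TensorProduct.induction_on with
  | zero => simp
  | add a c ha hc => simp [add_tmul, map_add, ha, hc]
  | tmul x y =>
    induction r' using TensorProduct.induction_on with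
    | zero => simp
    | add a c ha hc => simp [tmul_add, map_add, ha, hc]
    | tmul z w =>
      simp [comp23_12, tlift, map_smul, smul_smul]
      ring

lemma pr3_comp13_23 (m : A →ₗ[k] A →ₗ[k] A) (f g h : Module.Dual k A)
    (r r' : A ⊗[k] A) :
    pr3 f g h (comp13_23 m (r ⊗ₜ[k] r'))
      = h (m (Tr (TensorProduct.comm k A A r) f) (Tr (TensorProduct.comm k A A r') g)) := by
  induction r using TensorProduct.induction_on with
  | zero => simp
  | add a c ha hc => simp [add_tmul, map_add, ha, hc]
  | tmul x y =>
    induction r' using TensorProduct.induction_on with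
    | zero => simp
    | add a c ha hc => simp [tmul_add, map_add, ha, hc]
    | tmul z w =>
      simp [comp13_23, tlift, map_smul, smul_smul]
      ring
end Aux2
theorem stmt7 {A : Type v} [AddCommGroup A] [Module k A] [FiniteDimensional k A]
    (hchar : (2 : k) ≠ 0) (m : A →ₗ[k] A →ₗ[k] A) (halt : IsAlt m)
    (r : A ⊗[k] A) (hskew : TensorProduct.comm k A A r = -r) :
    (ayb m r = 0 ↔
      ∀ a b : Module.Dual k A,
        m (Tr r a) (Tr r b) = Tr r (dualT m.flip (Tr r a) b + dualT m (Tr r b) a)) ∧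
    (ayb m r = 0 →
      IsPreAlt (((dualT m ∘ₗ Tr r :
            Module.Dual k A →ₗ[k] Module.End k (Module.Dual k A)) :
          Module.Dual k A →ₗ[k] Module.Dual k A →ₗ[k] Module.Dual k A).flip)
        ((dualT m.flip ∘ₗ Tr r :
            Module.Dual k A →ₗ[k] Module.End k (Module.Dual k A)) :
          Module.Dual k A →ₗ[k] Module.Dual k A →ₗ[k] Module.Dual k A)) := by
  classical
  have hTc : ∀ f : Module.Dual k A, Tr (TensorProduct.comm k A A r) f = -(Tr r f) := by
    intro f; rw [hskew]; simp
  have hsk : ∀ f g : Module.Dual k A, f (Tr r g) = - g (Tr r f) := by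
    intro f g
    have h1 := apply_Tr (k := k) f g r
    have h2 := apply_Tr (k := k) g f r
    have h3 := pr2_comm (k := k) f g r
    rw [hskew, map_neg] at h3
    rw [h1, h2]
    linear_combination -h3
  have haybE : ∀ f g h : Module.Dual k A,
      pr3 f g h (ayb m r)
        = -(g (m (Tr r h) (Tr r f)) + f (m (Tr r g) (Tr r h))
            + h (m (Tr r f) (Tr r g))) := by
    intro f g h
    simp only [ayb, map_sub, pr3_comp23_12, pr3_comp12_13, pr3_comp13_23, hTc,
      map_neg, LinearMap.map_neg, LinearMap.neg_apply]
    ring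
  have hkey : ∀ a b c : Module.Dual k A,
      c (Tr r (dualT m.flip (Tr r a) b + dualT m (Tr r b) a))
        = -(b (m (Tr r c) (Tr r a)) + a (m (Tr r b) (Tr r c))) := by
    intro a b c
    rw [hsk c]
    simp only [dualT, LinearMap.comp_apply, Module.Dual.transpose_apply,
      LinearMap.add_apply, LinearMap.flip_apply]
  have part1 : ayb m r = 0 ↔
      ∀ a b : Module.Dual k A,
        m (Tr r a) (Tr r b) = Tr r (dualT m.flip (Tr r a) b + dualT m (Tr r b) a) := by
    constructor
    · intro h0 a b
      rw [← sub_eq_zero]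
      refine (Module.forall_dual_apply_eq_zero_iff k _).mp fun φ => ?_
      have hE := haybE a b φ
      rw [h0, map_zero] at hE
      rw [map_sub, hkey a b φ]
      linear_combination hE
    · intro hAl
      apply pr3_sep
      intro f g h
      rw [haybE]
      have h1 := congrArg h (hAl f g)
      rw [hkey f g h] at h1
      linear_combination -h1
  refine ⟨part1, fun h0 => ?_⟩
  have hAl := part1.mp h0
  set P : Module.Dual k A →ₗ[k] Module.Dual k A →ₗ[k] Module.Dual k A :=
    ((dualT m ∘ₗ Tr r :
        Module.Dual k A →ₗ[k] Module.End k (Module.Dual k A)) :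
      Module.Dual k A →ₗ[k] Module.Dual k A →ₗ[k] Module.Dual k A).flip with hPdef
  set S : Module.Dual k A →ₗ[k] Module.Dual k A →ₗ[k] Module.Dual k A :=
    ((dualT m.flip ∘ₗ Tr r :
        Module.Dual k A →ₗ[k] Module.End k (Module.Dual k A)) :
      Module.Dual k A →ₗ[k] Module.Dual k A →ₗ[k] Module.Dual k A) with hSdef
  have hp : ∀ (f g : Module.Dual k A) (w : A), (P f g) w = f (m (Tr r g) w) := fun f g w => rfl
  have hs : ∀ (f g : Module.Dual k A) (w : A), (S f g) w = g (m w (Tr r f)) := fun f g w => rfl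
  have hTsum : ∀ a b : Module.Dual k A, Tr r (P a b + S a b) = m (Tr r a) (Tr r b) := by
    intro a b
    rw [show P a b + S a b = dualT m.flip (Tr r a) b + dualT m (Tr r b) a from
      add_comm _ _, ← hAl]
  -- linearized alternativity
  have key1 : ∀ a b c : A,
      (m (m a b) c - m a (m b c)) + (m (m b a) c - m b (m a c)) = 0 := by
    intro a b c
    have h := halt.1 (a + b) c
    simp only [map_add, LinearMap.add_apply] at h
    linear_combination (norm := module) h - halt.1 a c - halt.1 b c
  have key2 : ∀ a b c : A,
      (m (m a b) c - m a (m b c)) + (m (m a c) b - m a (m c b)) = 0 := by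
    intro a b c
    have h := halt.2 (b + c) a
    simp only [map_add, LinearMap.add_apply] at h
    linear_combination (norm := module) h - halt.2 b a - halt.2 c a
  have hcyc3 : ∀ a b c : A,
      m (m a b) c - m a (m b c) = m (m b c) a - m b (m c a) := by
    intro a b c
    linear_combination (norm := module) key1 a b c - key2 b a c
  have hcyc : ∀ a b c : A,
      m (m a b) c - m a (m b c) = m (m c a) b - m c (m a b) :=
    fun a b c => (hcyc3 a b c).trans (hcyc3 b c a)
  have hy : ∀ (f : Module.Dual k A) (a b c : A),
      f (m (m a b) c) - f (m a (m b c)) = f (m (m c a) b) - f (m c (m a b)) := by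
    intro f a b c
    simpa [map_sub] using congrArg f (hcyc a b c)
  refine ⟨fun x y z => ?_, fun x y z => ?_, fun x y => ?_, fun x y => ?_⟩
  · ext w
    simp only [mAssoc, rAssoc, LinearMap.add_apply, LinearMap.sub_apply, hp, hs,
      hTsum, LinearMap.zero_apply]
    linear_combination hy y (Tr r z) w (Tr r x)
  · ext w
    simp only [mAssoc, lAssoc, LinearMap.add_apply, LinearMap.sub_apply, hp, hs,
      hTsum, LinearMap.zero_apply]
    linear_combination -hy y w (Tr r x) (Tr r z)
  · ext w
    simp only [rAssoc, LinearMap.add_apply, LinearMap.sub_apply, hp, hs,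
      hTsum, LinearMap.zero_apply]
    linear_combination -congrArg y (halt.1 (Tr r x) w)
  · ext w
    simp only [lAssoc, LinearMap.add_apply, LinearMap.sub_apply, hp, hs,
      hTsum, LinearMap.zero_apply]
    linear_combination -congrArg y (halt.2 (Tr r x) w)
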